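/- Let Y₊ := {y ∈ ℓ² : yᵢ ≥ 0 for all i} be the positive cone of ℓ², Ω := {x ∈ ℓ² : ‖x‖ ≤ 1}, F(x) := {(xᵢ²)ᵢ} + Y₊, and G(x) := {(xᵢ³)ᵢ}. Then: (i) the only x ∈ Ω with G(x) = {0} is x = 0, and F(0) = Y₊, so 0 is a minimal solution of the constrained problem; (ii) for the process Δ(z) := {y ∈ ℓ² : yᵢ ≥ ‖z‖_{ℓ²} for all i}, the graph of Δ is a closed convex cone; (iii) for every x ∈ Ω, (F(x) + Δ(G(x))) ∩ (-Y₊) ⊂ {0}, so 0 remains a minimal point of the penalized problem; (iv) core(Gph(Δ)) = ∅. -/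

import Mathlib

noncomputable section

/-- The algebraic core of a set. -/
def algCore {E : Type*} [AddCommMonoid E] [Module ℝ E] (A : Set E) : Set E :=
  {a ∈ A | ∀ v : E, ∃ δ : ℝ, 0 < δ ∧ ∀ ζ : ℝ, 0 ≤ ζ → ζ ≤ δ → a + ζ • v ∈ A}

abbrev l2 : Type := lp (fun _ : ℕ => ℝ) 2

/-- The positive cone of `ℓ²`. -/
def Ypos : Set l2 := {y : l2 | ∀ i : ℕ, 0 ≤ y i}

/-- `F(x) = {(xᵢ²)ᵢ} + Y₊`, described coordinatewise. -/
def Fmap (x : l2) : Set l2 :=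
  {y : l2 | ∃ p : l2, p ∈ Ypos ∧ ∀ i : ℕ, y i = x i ^ 2 + p i}

/-- `G(x) = {(xᵢ³)ᵢ}`, described coordinatewise. -/
def Gmap (x : l2) : Set l2 := {z : l2 | ∀ i : ℕ, z i = x i ^ 3}

/-- The multiplier process `Δ(z) = {y ∈ ℓ² : yᵢ ≥ ‖z‖ for all i}`. -/
def Dmap (z : l2) : Set l2 := {y : l2 | ∀ i : ℕ, ‖z‖ ≤ y i}

/-- Coordinates of an `ℓ²` element tend to zero. -/
lemma l2_tendsto_zero (y : l2) :
    Filter.Tendsto (fun i : ℕ => y i) Filter.atTop (nhds 0) := by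
  have hs : Summable (fun i : ℕ => ‖y i‖ ^ (2 : ENNReal).toReal) :=
    (lp.memℓp y).summable (by norm_num)
  have h2 : Filter.Tendsto (fun i : ℕ => ‖y i‖ ^ (2 : ENNReal).toReal)
      Filter.atTop (nhds 0) := hs.tendsto_atTop_zero
  have hsqrt : Filter.Tendsto (fun i : ℕ => Real.sqrt (‖y i‖ ^ (2 : ENNReal).toReal))
      Filter.atTop (nhds (Real.sqrt 0)) :=
    (Real.continuous_sqrt.tendsto 0).comp h2
  have heq : (fun i : ℕ => Real.sqrt (‖y i‖ ^ (2 : ENNReal).toReal)) = fun i => ‖y i‖ := by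
    funext i
    rw [show ((2 : ENNReal).toReal) = (2 : ℝ) by norm_num]
    rw [show (‖y i‖ : ℝ) ^ (2:ℝ) = ‖y i‖ ^ (2:ℕ) by
      rw [← Real.rpow_natCast]; norm_num]
    exact Real.sqrt_sq (norm_nonneg _)
  rw [heq, Real.sqrt_zero] at hsqrt
  exact squeeze_zero_norm (fun i => le_refl _) hsqrt

/-- Evaluation at a coordinate is continuous on `ℓ²`. -/
lemma l2_continuous_eval (i : ℕ) : Continuous (fun y : l2 => y i) := by
  have : Fact ((1 : ENNReal) ≤ 2) := ⟨by norm_num⟩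
  exact (continuous_apply i).comp (lp.uniformContinuous_coe (p := 2)).continuous

theorem ell2_example :
    (∀ x ∈ Metric.closedBall (0 : l2) 1, (0 : l2) ∈ Gmap x → x = 0) ∧
    Fmap 0 = Ypos ∧
    ((0 : l2) ∈ Fmap 0 ∧ ∀ y ∈ Fmap 0, (∀ i : ℕ, y i ≤ 0) → y = 0) ∧
    (IsClosed {p : l2 × l2 | p.2 ∈ Dmap p.1} ∧
      Convex ℝ {p : l2 × l2 | p.2 ∈ Dmap p.1} ∧
      ∀ r : ℝ, 0 ≤ r → ∀ p ∈ {p : l2 × l2 | p.2 ∈ Dmap p.1},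
        r • p ∈ {p : l2 × l2 | p.2 ∈ Dmap p.1}) ∧
    (∀ x ∈ Metric.closedBall (0 : l2) 1, ∀ a ∈ Fmap x, ∀ z ∈ Gmap x, ∀ d ∈ Dmap z,
      (∀ i : ℕ, (a + d) i ≤ 0) → a + d = 0) ∧
    algCore {p : l2 × l2 | p.2 ∈ Dmap p.1} = ∅ := by
  refine ⟨?_, ?_, ⟨?_, ?_⟩, ⟨?_, ?_, ?_⟩, ?_, ?_⟩
  · -- (i) feasibility
    intro x _ hx
    apply lp.ext
    funext i
    have := (hx i).symm
    simp only [lp.coeFn_zero, Pi.zero_apply] at this ⊢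
    exact pow_eq_zero_iff (by norm_num) |>.mp this
  · -- F(0) = Ypos
    ext y
    constructor
    · rintro ⟨p, hp, hy⟩ i
      rw [hy i]
      simpa using hp i
    · intro hy
      exact ⟨y, hy, fun i => by simp⟩
  · -- 0 ∈ F(0)
    exact ⟨0, fun i => le_refl _, fun i => by simp⟩
  · -- minimality
    rintro y ⟨p, hp, hy⟩ hle
    apply lp.ext
    funext i
    simp only [lp.coeFn_zero, Pi.zero_apply]
    have h1 : 0 ≤ y i := by rw [hy i]; simpa using hp i
    exact le_antisymm (hle i) h1
  · -- closedness
    have : {p : l2 × l2 | p.2 ∈ Dmap p.1} = ⋂ i : ℕ, {p : l2 × l2 | ‖p.1‖ ≤ p.2 i} := by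
      ext p; simp [Dmap, Set.mem_iInter]
    rw [this]
    refine isClosed_iInter fun i => ?_
    exact isClosed_le (continuous_norm.comp continuous_fst)
      ((l2_continuous_eval i).comp continuous_snd)
  · -- convexity
    rintro ⟨z₁, y₁⟩ h₁ ⟨z₂, y₂⟩ h₂ a b ha hb hab
    intro i
    simp only [Prod.smul_mk, Prod.mk_add_mk]
    have : ‖a • z₁ + b • z₂‖ ≤ a * ‖z₁‖ + b * ‖z₂‖ := by
      calc ‖a • z₁ + b • z₂‖ ≤ ‖a • z₁‖ + ‖b • z₂‖ := norm_add_le _ _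
        _ = a * ‖z₁‖ + b * ‖z₂‖ := by
            rw [norm_smul, norm_smul, Real.norm_of_nonneg ha, Real.norm_of_nonneg hb]
    refine this.trans ?_
    have e1 : ((a • y₁ + b • y₂ : l2) : ∀ _ : ℕ, ℝ) i = a * y₁ i + b * y₂ i := by
      simp [lp.coeFn_add, lp.coeFn_smul]
      rfl
    rw [e1]
    exact add_le_add (mul_le_mul_of_nonneg_left (h₁ i) ha)
      (mul_le_mul_of_nonneg_left (h₂ i) hb)
  · -- cone
    rintro r hr ⟨z, y⟩ hp i
    simp only [Prod.smul_mk]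
    have e1 : ((r • y : l2) : ∀ _ : ℕ, ℝ) i = r * y i := by simp [lp.coeFn_smul]
    rw [e1, norm_smul, Real.norm_of_nonneg hr]
    exact mul_le_mul_of_nonneg_left (hp i) hr
  · -- (iii)
    rintro x _ a ⟨p, hp, hap⟩ z hz d hd hle
    have hz0 : 0 ≤ ‖z‖ := norm_nonneg _
    apply lp.ext
    funext i
    have hi : ((a + d : l2) : ∀ _ : ℕ, ℝ) i = a i + d i := by simp [lp.coeFn_add]
    have hge : 0 ≤ a i + d i := by
      have h1 : 0 ≤ a i := by
        rw [hap i]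
        have := hp i
        positivity
      have h2 : 0 ≤ d i := hz0.trans (hd i)
      linarith
    have := hle i
    rw [hi] at this ⊢
    simp only [lp.coeFn_zero, Pi.zero_apply]
    linarith
  · -- (iv) core is empty
    ext q
    simp only [Set.mem_empty_iff_false, iff_false]
    rintro ⟨hq, hcore⟩
    obtain ⟨z, y⟩ := q
    -- coordinates of y tend to 0, so ‖z‖ ≤ 0 impossible unless useful
    have hy0 : Filter.Tendsto (fun i : ℕ => y i) Filter.atTop (nhds 0) := l2_tendsto_zero y
    set s : l2 := lp.single 2 0 (1 : ℝ) with hs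
    obtain ⟨δ, hδ, hδall⟩ := hcore (s, 0)
    have hmem := hδall δ hδ.le le_rfl
    simp only [Set.mem_setOf_eq, Prod.smul_mk, Prod.mk_add_mk, smul_zero, add_zero] at hmem
    -- from hq: ∀ i, ‖z‖ ≤ y i; with y i → 0, get ‖z‖ ≤ 0, so z = 0
    have hzle : ‖z‖ ≤ 0 := ge_of_tendsto hy0 (Filter.Eventually.of_forall fun i => hq i)
    have hz0 : z = 0 := norm_le_zero_iff.mp hzle
    -- now ∀ i, ‖δ • s‖ ≤ y i, and ‖δ • s‖ ≥ δ > 0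
    have hsnorm : δ ≤ ‖z + δ • s‖ := by
      rw [hz0, zero_add]
      have h1 : ‖(δ • s : l2) 0‖ ≤ ‖(δ • s : l2)‖ :=
        lp.norm_apply_le_norm (by norm_num) (δ • s) 0
      have h2 : ((δ • s : l2) : ∀ _ : ℕ, ℝ) 0 = δ := by
        simp [hs, lp.coeFn_smul, lp.single_apply_self]
      rw [h2, Real.norm_of_nonneg hδ.le] at h1
      exact h1
    have hcontra : ∀ i : ℕ, δ ≤ y i := fun i => hsnorm.trans (hmem i)
    have : δ ≤ 0 := ge_of_tendsto hy0 (Filter.Eventually.of_forall hcontra)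
    linarith
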